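/- Let N ≥ 2 be an integer and p ≥ N (with p > 1). If k ≤ -(p+N-3)/(2p-3), then E_{p,N,k}[cos](θ) ≥ 0 for every θ ∈ (0, π/2) (u = r^k·cos(θ) is p-subharmonic in ℝ^N₊); and if k ∈ [-(N-1)/(p-1), 0), then E_{p,N,k}[cos](θ) ≤ 0 for every θ ∈ (0, π/2) (u = r^k·cos(θ) is p-superharmonic in ℝ^N₊). -/

import Mathlib

noncomputable section
open Real Set

/-- The differential expression `E_{p,N,k}[f](θ)` whose sign coincides with the sign of the
`p`-Laplacian of the quasiradial function `u(r,θ) = r^k · f(θ)` in the upper half-space. -/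
def Ecal (p : ℝ) (N : ℕ) (k : ℝ) (f : ℝ → ℝ) (θ : ℝ) : ℝ :=
  ((p - 1) * (deriv f θ) ^ 2 + k ^ 2 * (f θ) ^ 2) * deriv (deriv f) θ
    + k * ((2 * p - 3) * k + (N : ℝ) - p) * f θ * (deriv f θ) ^ 2
    + k ^ 3 * (k * (p - 1) + (N : ℝ) - p) * (f θ) ^ 3
    + ((N : ℝ) - 2) * ((deriv f θ) ^ 2 + k ^ 2 * (f θ) ^ 2) * deriv f θ * Real.cot θ

lemma Ecal_cos_eq (p : ℝ) (N : ℕ) (k θ : ℝ) (hθ : θ ∈ Ioo (0 : ℝ) (π / 2)) :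
    Ecal p N k Real.cos θ =
      Real.cos θ * ((k - 1) *
        (((2 * p - 3) * k + p + (N : ℝ) - 3) * Real.sin θ ^ 2
          + k ^ 2 * ((p - 1) * k + (N : ℝ) - 1) * Real.cos θ ^ 2)) := by
  have hsin : Real.sin θ ≠ 0 := by
    have := Real.sin_pos_of_pos_of_lt_pi hθ.1 (lt_trans hθ.2 (by linarith [Real.pi_pos]))
    exact ne_of_gt this
  have h1 : deriv Real.cos = fun x => -Real.sin x := Real.deriv_cos'
  have h2 : deriv (deriv Real.cos) θ = -Real.cos θ := by
    rw [h1]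
    simp
  simp only [Ecal, h2]
  simp only [h1, Real.cot_eq_cos_div_sin]
  field_simp
  ring

/-- For `p ≥ N` (and `p > 1`): `u = r^k cos θ` is `p`-subharmonic for `k ≤ -(p+N-3)/(2p-3)`
and `p`-superharmonic for `k ∈ [-(N-1)/(p-1), 0)`. -/
theorem Ecal_cos_sign_large_p (N : ℕ) (hN : 2 ≤ N) (p : ℝ) (hp1 : 1 < p)
    (hp2 : (N : ℝ) ≤ p) (k : ℝ) :
    (k ≤ -((p + (N : ℝ) - 3) / (2 * p - 3)) →
      ∀ θ ∈ Ioo (0 : ℝ) (π / 2), 0 ≤ Ecal p N k Real.cos θ) ∧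
    (k ∈ Ico (-(((N : ℝ) - 1) / (p - 1))) 0 →
      ∀ θ ∈ Ioo (0 : ℝ) (π / 2), Ecal p N k Real.cos θ ≤ 0) := by
  have hN2 : (2 : ℝ) ≤ (N : ℝ) := by exact_mod_cast hN
  have hp2' : (2 : ℝ) ≤ p := le_trans hN2 hp2
  have h2p3 : (0 : ℝ) < 2 * p - 3 := by linarith
  have hp1' : (0 : ℝ) < p - 1 := by linarith
  constructor
  · intro hk θ hθ
    have hcos : 0 < Real.cos θ := Real.cos_pos_of_mem_Ioo
      ⟨by linarith [hθ.1, Real.pi_pos], hθ.2⟩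
    rw [Ecal_cos_eq p N k θ hθ]
    -- k*(2p-3) ≤ -(p+N-3)
    have hk1 : k * (2 * p - 3) ≤ -(p + (N : ℝ) - 3) := by
      have := mul_le_mul_of_nonneg_right hk h2p3.le
      rw [neg_mul, div_mul_cancel₀ _ (ne_of_gt h2p3)] at this
      linarith
    have hT1 : (2 * p - 3) * k + p + (N : ℝ) - 3 ≤ 0 := by linarith
    have hT2 : (p - 1) * k + (N : ℝ) - 1 ≤ 0 := by
      nlinarith [mul_nonneg (by linarith : (0:ℝ) ≤ p - 2) (by linarith : (0:ℝ) ≤ p - (N:ℝ))]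
    have hX : ((2 * p - 3) * k + p + (N : ℝ) - 3) * Real.sin θ ^ 2
        + k ^ 2 * ((p - 1) * k + (N : ℝ) - 1) * Real.cos θ ^ 2 ≤ 0 := by
      nlinarith [mul_nonpos_of_nonpos_of_nonneg hT1 (sq_nonneg (Real.sin θ)),
        mul_nonpos_of_nonpos_of_nonneg hT2 (mul_nonneg (sq_nonneg k) (sq_nonneg (Real.cos θ)))]
    have hk1' : k - 1 ≤ 0 := by nlinarith
    nlinarith [mul_nonneg hcos.le (mul_nonneg (neg_nonneg.2 hk1') (neg_nonneg.2 hX))]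
  · intro hk θ hθ
    have hcos : 0 < Real.cos θ := Real.cos_pos_of_mem_Ioo
      ⟨by linarith [hθ.1, Real.pi_pos], hθ.2⟩
    rw [Ecal_cos_eq p N k θ hθ]
    obtain ⟨hka, hkb⟩ := hk
    have hk1 : -((N : ℝ) - 1) ≤ k * (p - 1) := by
      have := mul_le_mul_of_nonneg_right hka hp1'.le
      rw [neg_mul, div_mul_cancel₀ _ (ne_of_gt hp1')] at this
      linarith
    have hT2 : 0 ≤ (p - 1) * k + (N : ℝ) - 1 := by linarith
    have hT1 : 0 ≤ (2 * p - 3) * k + p + (N : ℝ) - 3 := by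
      nlinarith [mul_nonneg (by linarith : (0:ℝ) ≤ p - 2) (by linarith : (0:ℝ) ≤ p - (N:ℝ))]
    have hX : 0 ≤ ((2 * p - 3) * k + p + (N : ℝ) - 3) * Real.sin θ ^ 2
        + k ^ 2 * ((p - 1) * k + (N : ℝ) - 1) * Real.cos θ ^ 2 := by
      positivity
    have hk1' : k - 1 ≤ 0 := by linarith
    exact mul_nonpos_of_nonneg_of_nonpos hcos.le (mul_nonpos_of_nonpos_of_nonneg hk1' hX)
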